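/- arXiv:2402.18819 — 4 statements merged into one kernel-verified Lean document; each statement's English description precedes it below -/
import Mathlib

section
/- Let N(z; c, C) denote the density at z of the multivariate normal distribution on ℝ^d with mean c and positive definite covariance matrix C, and N(y; c, s²) the univariate normal density. Then there exists a constant Z > 0, depending on x_1,…,x_{k+1}, y_1,…,y_k and on the parameters but not on (μ, w), such that for all μ, w ∈ ℝ^d: Σ_{m=1}^M π_m · N(μ; μ_m, σ_μ² I) · N(w; w_m, σ_w² I) · Π_{i=1}^{k+1} N(x_i; μ, σ_x² I) · Π_{i=1}^{k} N(y_i; ⟨w, x_i⟩, σ_y²) = Z · Σ_{m=1}^M π̃_m · N(μ; μ̃_m, σ_μ²(1+(k+1)δ_μ)^{−1} I) · N(w; w̃_m, σ_w²(I + kδ_w Σ̄_w)^{−1}). That is, the posterior of the task (μ, w) under the Gaussian-mixture prior and the noisy-linear-regression likelihood is again a Gaussian mixture whose components are re-weighted to π̃_m and re-centered at (μ̃_m, w̃_m). -/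
open MeasureTheory ProbabilityTheory Matrix Filter Topology
open scoped NNReal ENNReal

noncomputable section

namespace ICL

/-- Squared Euclidean norm of a vector, `‖v‖² = vᵀv`. -/
def sqnorm {d : ℕ} (v : Fin d → ℝ) : ℝ := dotProduct v v

/-- Univariate normal density `N(z; c, s²)`. -/
def normalPDF (z c s2 : ℝ) : ℝ :=
  (2 * Real.pi * s2) ^ (-(1 : ℝ) / 2) * Real.exp (-(z - c) ^ 2 / (2 * s2))

/-- Multivariate normal density `N(z; c, C)` on `ℝ^d` with mean `c` and covariance `C`. -/
def mvnPDF {d : ℕ} (z c : Fin d → ℝ) (C : Matrix (Fin d) (Fin d) ℝ) : ℝ :=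
  ((2 * Real.pi) ^ d * C.det) ^ (-(1 : ℝ) / 2) *
    Real.exp (-(dotProduct (z - c) (C⁻¹.mulVec (z - c))) / 2)

/-- `m̄ = (1/(k+1)) Σ_{i=1}^{k+1} x_i`. -/
def mbar {d : ℕ} (k : ℕ) (xs : Fin (k + 1) → Fin d → ℝ) : Fin d → ℝ :=
  ((k : ℝ) + 1)⁻¹ • ∑ i, xs i

/-- `Σ̄_w = (1/k) Σ_{i=1}^k x_i x_iᵀ` (the zero matrix if `k = 0`). -/
def barSigma {d : ℕ} (k : ℕ) (xs : Fin (k + 1) → Fin d → ℝ) : Matrix (Fin d) (Fin d) ℝ :=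
  (k : ℝ)⁻¹ • ∑ i : Fin k, vecMulVec (xs i.castSucc) (xs i.castSucc)

/-- `w̄ = (1/k) Σ_{i=1}^k x_i y_i` (the zero vector if `k = 0`). -/
def wbar {d : ℕ} (k : ℕ) (xs : Fin (k + 1) → Fin d → ℝ) (ys : Fin k → ℝ) : Fin d → ℝ :=
  (k : ℝ)⁻¹ • ∑ i : Fin k, ys i • xs i.castSucc

/-- The matrix `I + k δ_w Σ̄_w`. -/
def Bw {d : ℕ} (σw σy : ℝ) (k : ℕ) (xs : Fin (k + 1) → Fin d → ℝ) :
    Matrix (Fin d) (Fin d) ℝ :=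
  1 + ((k : ℝ) * (σw ^ 2 / σy ^ 2)) • barSigma k xs

/-- Shifted component center `μ̃_m = (1+(k+1)δ_μ)⁻¹ (μ_m + (k+1) δ_μ m̄)`. -/
def muTilde {d : ℕ} (σμ σx : ℝ) (μm : Fin d → ℝ) (k : ℕ)
    (xs : Fin (k + 1) → Fin d → ℝ) : Fin d → ℝ :=
  (1 + ((k : ℝ) + 1) * (σμ ^ 2 / σx ^ 2))⁻¹ •
    (μm + (((k : ℝ) + 1) * (σμ ^ 2 / σx ^ 2)) • mbar k xs)

/-- Shifted component center `w̃_m = (I + k δ_w Σ̄_w)⁻¹ (w_m + k δ_w w̄)`. -/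
def wTilde {d : ℕ} (σw σy : ℝ) (wm : Fin d → ℝ) (k : ℕ)
    (xs : Fin (k + 1) → Fin d → ℝ) (ys : Fin k → ℝ) : Fin d → ℝ :=
  (Bw σw σy k xs)⁻¹.mulVec (wm + ((k : ℝ) * (σw ^ 2 / σy ^ 2)) • wbar k xs ys)

/-- Re-weighting factor `c^μ_m`. -/
def cMu {d : ℕ} (σμ σx : ℝ) (μm : Fin d → ℝ) (k : ℕ)
    (xs : Fin (k + 1) → Fin d → ℝ) : ℝ :=
  Real.exp (-(sqnorm μm -
      (1 + ((k : ℝ) + 1) * (σμ ^ 2 / σx ^ 2))⁻¹ *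
        sqnorm (μm + (((k : ℝ) + 1) * (σμ ^ 2 / σx ^ 2)) • mbar k xs)) / (2 * σμ ^ 2))

/-- Re-weighting factor `c^w_m`. -/
def cW {d : ℕ} (σw σy : ℝ) (wm : Fin d → ℝ) (k : ℕ)
    (xs : Fin (k + 1) → Fin d → ℝ) (ys : Fin k → ℝ) : ℝ :=
  Real.exp (-(sqnorm wm -
      dotProduct (wm + ((k : ℝ) * (σw ^ 2 / σy ^ 2)) • wbar k xs ys)
        ((Bw σw σy k xs)⁻¹.mulVec
          (wm + ((k : ℝ) * (σw ^ 2 / σy ^ 2)) • wbar k xs ys))) / (2 * σw ^ 2))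

/-- Posterior mixture weight `π̃_m`. -/
def piTilde {d M : ℕ} (πc : Fin M → ℝ) (μc wc : Fin M → Fin d → ℝ)
    (σμ σw σx σy : ℝ) (k : ℕ) (xs : Fin (k + 1) → Fin d → ℝ) (ys : Fin k → ℝ)
    (m : Fin M) : ℝ :=
  πc m * cMu σμ σx (μc m) k xs * cW σw σy (wc m) k xs ys /
    ∑ l, πc l * cMu σμ σx (μc l) k xs * cW σw σy (wc l) k xs ys

/-- The Bayes-optimal in-context prediction `F*_k = ⟨x_{k+1}, Σ_m π̃_m w̃_m⟩`. -/
def Fstar {d M : ℕ} (πc : Fin M → ℝ) (μc wc : Fin M → Fin d → ℝ)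
    (σμ σw σx σy : ℝ) (k : ℕ) (xs : Fin (k + 1) → Fin d → ℝ) (ys : Fin k → ℝ) : ℝ :=
  dotProduct (xs (Fin.last k))
    (∑ m, piTilde πc μc wc σμ σw σx σy k xs ys m • wTilde σw σy (wc m) k xs ys)

/-- The isotropic Gaussian measure `N(c, v·I)` on `ℝ^d`, as a product of
univariate Gaussians. -/
def gaussianVec (d : ℕ) (c : Fin d → ℝ) (v : ℝ≥0) : Measure (Fin d → ℝ) :=
  Measure.pi fun i => gaussianReal (c i) v

instance (d : ℕ) (c : Fin d → ℝ) (v : ℝ≥0) : IsProbabilityMeasure (gaussianVec d c v) := by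
  unfold gaussianVec; infer_instance

/-- The law of `K` i.i.d. samples from `N(c, v·I)`. -/
def samples (d K : ℕ) (c : Fin d → ℝ) (v : ℝ≥0) : Measure (Fin K → Fin d → ℝ) :=
  Measure.pi fun _ => gaussianVec d c v

instance (d K : ℕ) (c : Fin d → ℝ) (v : ℝ≥0) : IsProbabilityMeasure (samples d K c v) := by
  unfold samples; infer_instance

/-- Largest eigenvalue of a (symmetric) matrix, as the supremum of its eigenvalues. -/
def maxEigenvalue {d : ℕ} (A : Matrix (Fin d) (Fin d) ℝ) : ℝ :=
  sSup {t : ℝ | Module.End.HasEigenvalue (Matrix.toLin' A) t}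

end ICL


open ICL

section AuxLemmas

open Matrix

lemma aux_dotProduct_sum {d : ℕ} {ι : Type*} (s : Finset ι) (u : Fin d → ℝ) (v : ι → Fin d → ℝ) :
    u ⬝ᵥ (∑ i ∈ s, v i) = ∑ i ∈ s, u ⬝ᵥ v i := by
  simp [dotProduct, Finset.mul_sum, Finset.sum_apply]
  exact Finset.sum_comm

lemma aux_sum_mulVec {d : ℕ} {ι : Type*} (s : Finset ι) (M : ι → Matrix (Fin d) (Fin d) ℝ)
    (z : Fin d → ℝ) : (∑ i ∈ s, M i) *ᵥ z = ∑ i ∈ s, (M i) *ᵥ z := by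
  ext j
  simp [Matrix.mulVec, dotProduct, Matrix.sum_apply, Finset.sum_mul, Finset.sum_apply]
  exact Finset.sum_comm

lemma aux_vecMulVec_mulVec {d : ℕ} (a b z : Fin d → ℝ) :
    (vecMulVec a b) *ᵥ z = (b ⬝ᵥ z) • a := by
  ext i
  simp [Matrix.mulVec, vecMulVec_apply, dotProduct, Finset.mul_sum, mul_assoc, mul_comm,
    mul_left_comm]

lemma aux_smul_one_inv {d : ℕ} (s : ℝ) (hs : s ≠ 0) :
    (s • (1 : Matrix (Fin d) (Fin d) ℝ))⁻¹ = s⁻¹ • 1 := by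
  apply Matrix.inv_eq_right_inv
  rw [Matrix.smul_mul, Matrix.mul_smul, one_mul, smul_smul, mul_inv_cancel₀ hs, one_smul]

lemma aux_det_smul_one {d : ℕ} (s : ℝ) :
    (s • (1 : Matrix (Fin d) (Fin d) ℝ)).det = s ^ d := by
  rw [Matrix.det_smul, Matrix.det_one, mul_one, Fintype.card_fin]

lemma aux_dotProduct_self_pos {d : ℕ} {v : Fin d → ℝ} (hv : v ≠ 0) : 0 < v ⬝ᵥ v := by
  rcases lt_or_eq_of_le (Finset.sum_nonneg fun i _ => mul_self_nonneg (v i) : (0:ℝ) ≤ v ⬝ᵥ v)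
    with h | h
  · exact h
  · exact absurd (dotProduct_self_eq_zero.mp h.symm) hv

lemma aux_expand_sub_sub {d : ℕ} (u w : Fin d → ℝ) :
    (u - w) ⬝ᵥ (u - w) = u ⬝ᵥ u - 2 * (u ⬝ᵥ w) + w ⬝ᵥ w := by
  rw [dotProduct_sub, sub_dotProduct, sub_dotProduct, dotProduct_comm w u]; ring

lemma aux_expand_sub_smul {d : ℕ} (c : ℝ) (u v : Fin d → ℝ) :
    (u - c • v) ⬝ᵥ (u - c • v) = u ⬝ᵥ u - 2 * (c * (u ⬝ᵥ v)) + c^2 * (v ⬝ᵥ v) := by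
  simp only [dotProduct_sub, sub_dotProduct, dotProduct_smul, smul_dotProduct, smul_eq_mul,
    dotProduct_comm v u]; ring

lemma aux_core_mu (σμ δ n a b cc S p V : ℝ) (hσμ : σμ ≠ 0) (hn : (0:ℝ) < 1 + n * δ) :
    ((σμ^2)⁻¹ * (a - 2*b + cc))/2 + (δ * (σμ^2)⁻¹ * (S - 2*p + n*a))/2
    = ((σμ^2 * (1 + n*δ)⁻¹)⁻¹ * (a - 2*((1 + n*δ)⁻¹*(b + δ*p)) + ((1 + n*δ)⁻¹)^2*V))/2
      + (cc - (1 + n*δ)⁻¹*V)/(2*σμ^2) + (δ * (σμ^2)⁻¹ * S)/2 := by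
  have h : 1 + n*δ ≠ 0 := ne_of_gt hn
  rw [mul_inv, inv_inv]
  have ht : (1 + n*δ)⁻¹ * (1 + n*δ) = 1 := inv_mul_cancel₀ h
  generalize (1 + n*δ)⁻¹ = t at ht ⊢
  linear_combination ((2*(b+δ*p) - t*V)/(2*σμ^2)) * ht

lemma aux_core_w (σw σy δ a b cc P L Y U : ℝ) (hσw : σw ≠ 0) (hσy : σy ≠ 0)
    (hδ : δ = σw^2/σy^2) :
    ((σw^2)⁻¹ * (a - 2*b + cc))/2 + (Y - 2*L + P)/(2*σy^2)
    = ((σw^2)⁻¹ * (a + δ*P - 2*(b + δ*L) + U))/2 + (cc - U)/(2*σw^2) + Y/(2*σy^2) := by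
  subst hδ; field_simp; ring

lemma aux_Imu (d k : ℕ) (σμ σx : ℝ) (hσμ : σμ ≠ 0) (hσx : σx ≠ 0)
    (μ μm : Fin d → ℝ) (xs : Fin (k + 1) → Fin d → ℝ) :
    ((σμ^2)⁻¹ * ((μ - μm) ⬝ᵥ (μ - μm)))/2
      + ∑ i, ((σx^2)⁻¹ * ((xs i - μ) ⬝ᵥ (xs i - μ)))/2
    = ((σμ^2 * (1 + ((k:ℝ)+1) * (σμ^2/σx^2))⁻¹)⁻¹ *
        ((μ - (1 + ((k:ℝ)+1) * (σμ^2/σx^2))⁻¹ • (μm + (σμ^2/σx^2) • ∑ i, xs i)) ⬝ᵥ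
         (μ - (1 + ((k:ℝ)+1) * (σμ^2/σx^2))⁻¹ • (μm + (σμ^2/σx^2) • ∑ i, xs i))))/2
      + (μm ⬝ᵥ μm - (1 + ((k:ℝ)+1) * (σμ^2/σx^2))⁻¹ *
          ((μm + (σμ^2/σx^2) • ∑ i, xs i) ⬝ᵥ (μm + (σμ^2/σx^2) • ∑ i, xs i)))/(2 * σμ^2)
      + ((σx^2)⁻¹ * ∑ i, xs i ⬝ᵥ xs i)/2 := by
  set δ := σμ^2/σx^2 with hδ
  set sx := ∑ i, xs i with hsx
  set v := μm + δ • sx with hv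
  have hδpos : 0 < δ := by positivity
  have htpos : (0:ℝ) < 1 + ((k:ℝ)+1) * δ := by positivity
  have h1 := aux_expand_sub_sub μ μm
  have h2 : ∀ i : Fin (k+1), (xs i - μ) ⬝ᵥ (xs i - μ)
      = xs i ⬝ᵥ xs i - 2 * (μ ⬝ᵥ xs i) + μ ⬝ᵥ μ := by
    intro i
    have := aux_expand_sub_sub (xs i) μ
    rw [this, dotProduct_comm μ (xs i)]
  have h3 : ∑ i, (μ ⬝ᵥ xs i) = μ ⬝ᵥ sx := (aux_dotProduct_sum _ _ _).symm
  have h4 : ∑ i, ((σx^2)⁻¹ * ((xs i - μ) ⬝ᵥ (xs i - μ)))/2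
      = (δ * (σμ^2)⁻¹ * ((∑ i, xs i ⬝ᵥ xs i) - 2 * (μ ⬝ᵥ sx) + ((k:ℝ)+1) * (μ ⬝ᵥ μ)))/2 := by
    have hc : (σx^2)⁻¹ = δ * (σμ^2)⁻¹ := by rw [hδ]; field_simp
    calc ∑ i, ((σx^2)⁻¹ * ((xs i - μ) ⬝ᵥ (xs i - μ)))/2
        = ∑ i, ((σx^2)⁻¹ * (xs i ⬝ᵥ xs i - 2 * (μ ⬝ᵥ xs i) + μ ⬝ᵥ μ))/2 :=
          Finset.sum_congr rfl (fun i _ => by rw [h2 i])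
      _ = ((σx^2)⁻¹ * (∑ i, (xs i ⬝ᵥ xs i - 2 * (μ ⬝ᵥ xs i) + μ ⬝ᵥ μ)))/2 := by
          rw [Finset.mul_sum, Finset.sum_div]
      _ = _ := by
          rw [Finset.sum_add_distrib, Finset.sum_sub_distrib, ← Finset.mul_sum, h3,
            Finset.sum_const, Finset.card_univ, Fintype.card_fin, hc, nsmul_eq_mul]
          push_cast
          ring
  have h5 : (μ - (1 + ((k:ℝ)+1) * δ)⁻¹ • v) ⬝ᵥ (μ - (1 + ((k:ℝ)+1) * δ)⁻¹ • v)
      = μ ⬝ᵥ μ - 2 * ((1 + ((k:ℝ)+1) * δ)⁻¹ * (μ ⬝ᵥ v))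
        + ((1 + ((k:ℝ)+1) * δ)⁻¹)^2 * (v ⬝ᵥ v) :=
    aux_expand_sub_smul _ μ v
  have h6 : μ ⬝ᵥ v = μ ⬝ᵥ μm + δ * (μ ⬝ᵥ sx) := by
    rw [hv, dotProduct_add, dotProduct_smul, smul_eq_mul]
  rw [h4, h1, h5, h6]
  have hc : (σx^2)⁻¹ = δ * (σμ^2)⁻¹ := by rw [hδ]; field_simp
  rw [hc]
  linear_combination aux_core_mu σμ δ ((k:ℝ)+1) (μ ⬝ᵥ μ) (μ ⬝ᵥ μm) (μm ⬝ᵥ μm)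
    (∑ i, xs i ⬝ᵥ xs i) (μ ⬝ᵥ sx) (v ⬝ᵥ v) hσμ htpos

lemma aux_Iw (d k : ℕ) (σw σy : ℝ) (hσw : σw ≠ 0) (hσy : σy ≠ 0)
    (w wm wt : Fin d → ℝ) (xs : Fin (k + 1) → Fin d → ℝ) (ys : Fin k → ℝ)
    (B : Matrix (Fin d) (Fin d) ℝ)
    (hB : ∀ z, B *ᵥ z = z + (σw^2/σy^2) • ∑ i : Fin k, (xs i.castSucc ⬝ᵥ z) • xs i.castSucc)
    (hu : B *ᵥ wt = wm + (σw^2/σy^2) • ∑ i : Fin k, ys i • xs i.castSucc) :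
    ((σw^2)⁻¹ * ((w - wm) ⬝ᵥ (w - wm)))/2 + ∑ i : Fin k, (ys i - w ⬝ᵥ xs i.castSucc)^2/(2*σy^2)
    = ((σw^2)⁻¹ * ((w - wt) ⬝ᵥ (B *ᵥ (w - wt))))/2
      + (wm ⬝ᵥ wm - (wm + (σw^2/σy^2) • ∑ i : Fin k, ys i • xs i.castSucc) ⬝ᵥ wt)/(2*σw^2)
      + ∑ i : Fin k, (ys i)^2/(2*σy^2) := by
  set δ := σw^2/σy^2 with hδ
  set sw := ∑ i : Fin k, ys i • xs i.castSucc with hsw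
  set u := wm + δ • sw with huu
  have hz : ∀ z z' : Fin d → ℝ,
      z' ⬝ᵥ (B *ᵥ z) = z' ⬝ᵥ z + δ * ∑ i : Fin k, (xs i.castSucc ⬝ᵥ z) * (z' ⬝ᵥ xs i.castSucc) := by
    intro z z'
    rw [hB z, dotProduct_add, dotProduct_smul, smul_eq_mul, aux_dotProduct_sum]
    rw [(Finset.sum_congr rfl fun (i : Fin k) _ => by
      rw [dotProduct_smul, smul_eq_mul] :
      ∑ i : Fin k, z' ⬝ᵥ (xs i.castSucc ⬝ᵥ z) • xs i.castSucc
        = ∑ i : Fin k, (xs i.castSucc ⬝ᵥ z) * (z' ⬝ᵥ xs i.castSucc))]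
  have hsym : wt ⬝ᵥ (B *ᵥ w) = w ⬝ᵥ u := by
    have h1 : w ⬝ᵥ (B *ᵥ wt) = w ⬝ᵥ u := by rw [hu]
    rw [← h1, hz wt w, hz w wt, dotProduct_comm wt w]
    congr 1
    rw [Finset.mul_sum, Finset.mul_sum]
    exact Finset.sum_congr rfl fun i _ => by
      rw [dotProduct_comm (xs i.castSucc) w, dotProduct_comm wt (xs i.castSucc),
        dotProduct_comm (xs i.castSucc) wt, dotProduct_comm w (xs i.castSucc)]; ring
  have hBww : w ⬝ᵥ (B *ᵥ w) = w ⬝ᵥ w + δ * ∑ i : Fin k, (w ⬝ᵥ xs i.castSucc)^2 := by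
    rw [hz w w]
    rw [(Finset.sum_congr rfl fun (i : Fin k) _ => by
      rw [dotProduct_comm (xs i.castSucc) w, sq] :
      ∑ i : Fin k, (xs i.castSucc ⬝ᵥ w) * (w ⬝ᵥ xs i.castSucc)
        = ∑ i : Fin k, (w ⬝ᵥ xs i.castSucc)^2)]
  have hwu : w ⬝ᵥ u = w ⬝ᵥ wm + δ * ∑ i : Fin k, ys i * (w ⬝ᵥ xs i.castSucc) := by
    rw [huu, dotProduct_add, dotProduct_smul, smul_eq_mul, hsw, aux_dotProduct_sum]
    rw [(Finset.sum_congr rfl fun (i : Fin k) _ => by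
      rw [dotProduct_smul, smul_eq_mul] :
      ∑ i : Fin k, w ⬝ᵥ (ys i • xs i.castSucc) = ∑ i : Fin k, ys i * (w ⬝ᵥ xs i.castSucc))]
  have hQ : (w - wt) ⬝ᵥ (B *ᵥ (w - wt))
      = w ⬝ᵥ w + δ * ∑ i : Fin k, (w ⬝ᵥ xs i.castSucc)^2
        - 2 * (w ⬝ᵥ wm + δ * ∑ i : Fin k, ys i * (w ⬝ᵥ xs i.castSucc)) + u ⬝ᵥ wt := by
    rw [Matrix.mulVec_sub, dotProduct_sub, sub_dotProduct, sub_dotProduct, hu]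
    rw [hsym, hBww, hwu, dotProduct_comm wt u]
    ring
  have hG : ∑ i : Fin k, (ys i - w ⬝ᵥ xs i.castSucc)^2/(2*σy^2)
      = ((∑ i : Fin k, (ys i)^2) - 2 * ∑ i : Fin k, ys i * (w ⬝ᵥ xs i.castSucc)
          + ∑ i : Fin k, (w ⬝ᵥ xs i.castSucc)^2)/(2*σy^2) := by
    rw [← Finset.sum_div]
    congr 1
    rw [(Finset.sum_congr rfl fun (i : Fin k) _ => by
      ring :
      ∑ i : Fin k, (ys i - w ⬝ᵥ xs i.castSucc)^2
        = ∑ i : Fin k, ((ys i)^2 - 2 * (ys i * (w ⬝ᵥ xs i.castSucc)) + (w ⬝ᵥ xs i.castSucc)^2))]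
    rw [Finset.sum_add_distrib, Finset.sum_sub_distrib, ← Finset.mul_sum]
  have hY : ∑ i : Fin k, (ys i)^2/(2*σy^2) = (∑ i : Fin k, (ys i)^2)/(2*σy^2) :=
    (Finset.sum_div _ _ _).symm
  rw [aux_expand_sub_sub w wm, hQ, hG, hY]
  linear_combination aux_core_w σw σy δ (w ⬝ᵥ w) (w ⬝ᵥ wm) (wm ⬝ᵥ wm)
    (∑ i : Fin k, (w ⬝ᵥ xs i.castSucc)^2) (∑ i : Fin k, ys i * (w ⬝ᵥ xs i.castSucc))
    (∑ i : Fin k, (ys i)^2) (u ⬝ᵥ wt) hσw hσy rfl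

lemma aux_mvn_smul_one {d : ℕ} (z c : Fin d → ℝ) (s : ℝ) (hs : s ≠ 0) :
    mvnPDF z c (s • 1) = ((2 * Real.pi) ^ d * (s • (1 : Matrix (Fin d) (Fin d) ℝ)).det)
        ^ (-(1:ℝ)/2) * Real.exp (-(s⁻¹ * ((z - c) ⬝ᵥ (z - c)))/2) := by
  simp only [mvnPDF]
  rw [aux_smul_one_inv s hs, Matrix.smul_mulVec, Matrix.one_mulVec, dotProduct_smul,
    smul_eq_mul]

lemma aux_combine (pi a1 a2 a3 a4 a5 a6 e1 e2 f g ed emu ew e5 e6 : ℝ)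
    (ha5 : a5 ≠ 0) (ha6 : a6 ≠ 0)
    (hE : e1 + e2 + f + g = ed + emu + ew + e5 + e6) :
    pi * (a1 * Real.exp e1) * (a2 * Real.exp e2) * (a3 * Real.exp f) * (a4 * Real.exp g)
    = a1 * a2 * a3 * a4 * a5⁻¹ * a6⁻¹ * Real.exp ed * (pi * Real.exp emu * Real.exp ew) *
        (a5 * Real.exp e5) * (a6 * Real.exp e6) := by
  have h : Real.exp e1 * Real.exp e2 * Real.exp f * Real.exp g
      = Real.exp ed * Real.exp emu * Real.exp ew * Real.exp e5 * Real.exp e6 := by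
    rw [← Real.exp_add, ← Real.exp_add, ← Real.exp_add, hE, Real.exp_add, Real.exp_add,
      Real.exp_add, Real.exp_add]
  calc pi * (a1 * Real.exp e1) * (a2 * Real.exp e2) * (a3 * Real.exp f) * (a4 * Real.exp g)
      = (a1 * a2 * a3 * a4 * pi) *
          (Real.exp e1 * Real.exp e2 * Real.exp f * Real.exp g) := by ring
    _ = (a1 * a2 * a3 * a4 * pi) *
          (Real.exp ed * Real.exp emu * Real.exp ew * Real.exp e5 * Real.exp e6) := by rw [h]
    _ = _ := by field_simp

lemma aux_Zsplit (Kc S num P1 P2 : ℝ) (hS : S ≠ 0) :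
    Kc * S * (num / S * P1 * P2) = Kc * num * P1 * P2 := by
  field_simp

end AuxLemmas



/-- Conjugacy: the posterior of the task `(μ, w)` under the
Gaussian-mixture prior and the noisy-linear-regression likelihood is again a
Gaussian mixture, with components re-weighted to `π̃_m` and re-centered at
`(μ̃_m, w̃_m)`. -/
theorem posterior_is_gaussian_mixture
    (d M k : ℕ) (hd : 0 < d) (hM : 0 < M)
    (μc wc : Fin M → Fin d → ℝ) (πc : Fin M → ℝ)
    (hπ : ∀ m, πc m ∈ Set.Ioo (0 : ℝ) 1) (hπs : ∑ m, πc m = 1)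
    (σμ σw σx σy : ℝ) (hσμ : 0 < σμ) (hσw : 0 < σw) (hσx : 0 < σx) (hσy : 0 < σy)
    (xs : Fin (k + 1) → Fin d → ℝ) (ys : Fin k → ℝ) :
    ∃ Z : ℝ, 0 < Z ∧ ∀ μ w : Fin d → ℝ,
      (∑ m, πc m * mvnPDF μ (μc m) (σμ ^ 2 • 1) * mvnPDF w (wc m) (σw ^ 2 • 1) *
          (∏ i : Fin (k + 1), mvnPDF (xs i) μ (σx ^ 2 • 1)) *
          (∏ i : Fin k, normalPDF (ys i) (dotProduct w (xs i.castSucc)) (σy ^ 2)))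
      = Z * ∑ m, piTilde πc μc wc σμ σw σx σy k xs ys m *
          mvnPDF μ (muTilde σμ σx (μc m) k xs)
            ((σμ ^ 2 * (1 + ((k : ℝ) + 1) * (σμ ^ 2 / σx ^ 2))⁻¹) • 1) *
          mvnPDF w (wTilde σw σy (wc m) k xs ys)
            (σw ^ 2 • (Bw σw σy k xs)⁻¹) := by
  classical
  have hσμne : σμ ^ 2 ≠ 0 := by positivity
  have hσwne : σw ^ 2 ≠ 0 := by positivity
  have hσxne : σx ^ 2 ≠ 0 := by positivity
  have htpos : (0:ℝ) < 1 + ((k:ℝ) + 1) * (σμ ^ 2 / σx ^ 2) := by positivity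
  have htne : (1:ℝ) + ((k:ℝ) + 1) * (σμ ^ 2 / σx ^ 2) ≠ 0 := ne_of_gt htpos
  have hsne : σμ ^ 2 * (1 + ((k:ℝ) + 1) * (σμ ^ 2 / σx ^ 2))⁻¹ ≠ 0 := by positivity
  have hBeq : Bw σw σy k xs
      = 1 + (σw ^ 2 / σy ^ 2) • ∑ i : Fin k, vecMulVec (xs i.castSucc) (xs i.castSucc) := by
    simp only [Bw, barSigma, smul_smul]
    rcases Nat.eq_zero_or_pos k with hk | hk
    · subst hk; simp
    · have hkne : (k:ℝ) ≠ 0 := Nat.cast_ne_zero.mpr (Nat.pos_iff_ne_zero.mp hk)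
      rw [show (k:ℝ) * (σw ^ 2 / σy ^ 2) * (k:ℝ)⁻¹ = σw ^ 2 / σy ^ 2 by
        rw [mul_comm (k:ℝ) (σw ^ 2 / σy ^ 2), mul_assoc, mul_inv_cancel₀ hkne, mul_one]]
  have hBapp : ∀ z : Fin d → ℝ, Bw σw σy k xs *ᵥ z
      = z + (σw ^ 2 / σy ^ 2) • ∑ i : Fin k, (xs i.castSucc ⬝ᵥ z) • xs i.castSucc := by
    intro z
    rw [hBeq, Matrix.add_mulVec, Matrix.one_mulVec, Matrix.smul_mulVec, aux_sum_mulVec]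
    congr 2
    exact Finset.sum_congr rfl fun i _ => aux_vecMulVec_mulVec _ _ _
  have hww : ((k:ℝ) * (σw ^ 2 / σy ^ 2)) • wbar k xs ys
      = (σw ^ 2 / σy ^ 2) • ∑ i : Fin k, ys i • xs i.castSucc := by
    simp only [wbar, smul_smul]
    rcases Nat.eq_zero_or_pos k with hk | hk
    · subst hk; simp
    · have hkne : (k:ℝ) ≠ 0 := Nat.cast_ne_zero.mpr (Nat.pos_iff_ne_zero.mp hk)
      rw [show (k:ℝ) * (σw ^ 2 / σy ^ 2) * (k:ℝ)⁻¹ = σw ^ 2 / σy ^ 2 by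
        rw [mul_comm (k:ℝ) (σw ^ 2 / σy ^ 2), mul_assoc, mul_inv_cancel₀ hkne, mul_one]]
  have hvm : ∀ p : Fin d → ℝ, p + (((k:ℝ) + 1) * (σμ ^ 2 / σx ^ 2)) • mbar k xs
      = p + (σμ ^ 2 / σx ^ 2) • ∑ i, xs i := by
    intro p
    have hk1 : ((k:ℝ) + 1) ≠ 0 := by positivity
    simp only [mbar, smul_smul]
    rw [show ((k:ℝ) + 1) * (σμ ^ 2 / σx ^ 2) * ((k:ℝ) + 1)⁻¹ = σμ ^ 2 / σx ^ 2 by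
      rw [mul_comm ((k:ℝ) + 1) (σμ ^ 2 / σx ^ 2), mul_assoc, mul_inv_cancel₀ hk1, mul_one]]
  have hPD : (Bw σw σy k xs).PosDef := by
    refine Matrix.PosDef.of_dotProduct_mulVec_pos ?_ ?_
    · show (Bw σw σy k xs)ᴴ = Bw σw σy k xs
      rw [hBeq]
      ext i j
      simp [Matrix.conjTranspose_apply, Matrix.add_apply, Matrix.smul_apply, Matrix.one_apply,
        Matrix.sum_apply, Matrix.vecMulVec_apply, eq_comm, smul_eq_mul, mul_comm]
    · intro x hx
      have hst : star x = x := rfl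
      rw [hst, hBapp x, dotProduct_add, dotProduct_smul, smul_eq_mul, aux_dotProduct_sum]
      have h1 : 0 < x ⬝ᵥ x := aux_dotProduct_self_pos hx
      have h2 : 0 ≤ (σw ^ 2 / σy ^ 2) *
          ∑ i : Fin k, x ⬝ᵥ ((xs i.castSucc ⬝ᵥ x) • xs i.castSucc) := by
        apply mul_nonneg (by positivity)
        apply Finset.sum_nonneg
        intro i _
        rw [dotProduct_smul, smul_eq_mul, dotProduct_comm x (xs i.castSucc)]
        exact mul_self_nonneg _
      linarith
  have hdetB : 0 < (Bw σw σy k xs).det := hPD.det_pos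
  have hdetBne : (Bw σw σy k xs).det ≠ 0 := ne_of_gt hdetB
  have hBinvB : (Bw σw σy k xs)⁻¹ * Bw σw σy k xs = 1 :=
    Matrix.nonsing_inv_mul _ (isUnit_iff_ne_zero.mpr hdetBne)
  have hBBinv : Bw σw σy k xs * (Bw σw σy k xs)⁻¹ = 1 :=
    Matrix.mul_nonsing_inv _ (isUnit_iff_ne_zero.mpr hdetBne)
  have hinv2 : (σw ^ 2 • (Bw σw σy k xs)⁻¹)⁻¹ = (σw ^ 2)⁻¹ • Bw σw σy k xs := by
    apply Matrix.inv_eq_right_inv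
    rw [Matrix.smul_mul, Matrix.mul_smul, hBinvB, smul_smul, mul_inv_cancel₀ hσwne, one_smul]
  have hwtEq : ∀ q : Fin d → ℝ, wTilde σw σy q k xs ys
      = (Bw σw σy k xs)⁻¹ *ᵥ (q + (σw ^ 2 / σy ^ 2) • ∑ i : Fin k, ys i • xs i.castSucc) := by
    intro q
    simp only [wTilde]
    rw [hww]
  have hwtu : ∀ q : Fin d → ℝ, Bw σw σy k xs *ᵥ wTilde σw σy q k xs ys
      = q + (σw ^ 2 / σy ^ 2) • ∑ i : Fin k, ys i • xs i.castSucc := by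
    intro q
    rw [hwtEq q, Matrix.mulVec_mulVec, hBBinv, Matrix.one_mulVec]
  have hdet6 : (σw ^ 2 • (Bw σw σy k xs)⁻¹).det = (σw ^ 2) ^ d * ((Bw σw σy k xs).det)⁻¹ := by
    rw [Matrix.det_smul, Fintype.card_fin, Matrix.det_nonsing_inv, Ring.inverse_eq_inv']
  have hA1pos : 0 < ((2 * Real.pi) ^ d * (σμ ^ 2 • (1 : Matrix (Fin d) (Fin d) ℝ)).det) ^ (-(1:ℝ)/2) :=
    Real.rpow_pos_of_pos (by rw [aux_det_smul_one]; positivity) _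
  have hA2pos : 0 < ((2 * Real.pi) ^ d * (σw ^ 2 • (1 : Matrix (Fin d) (Fin d) ℝ)).det) ^ (-(1:ℝ)/2) :=
    Real.rpow_pos_of_pos (by rw [aux_det_smul_one]; positivity) _
  have hA3pos : 0 < ((2 * Real.pi) ^ d * (σx ^ 2 • (1 : Matrix (Fin d) (Fin d) ℝ)).det) ^ (-(1:ℝ)/2) :=
    Real.rpow_pos_of_pos (by rw [aux_det_smul_one]; positivity) _
  have hA4pos : 0 < (2 * Real.pi * σy ^ 2) ^ (-(1:ℝ)/2) := Real.rpow_pos_of_pos (by positivity) _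
  have hA5pos : 0 < ((2 * Real.pi) ^ d * ((σμ ^ 2 * (1 + ((k:ℝ) + 1) * (σμ ^ 2 / σx ^ 2))⁻¹) • (1 : Matrix (Fin d) (Fin d) ℝ)).det) ^ (-(1:ℝ)/2) :=
    Real.rpow_pos_of_pos (by rw [aux_det_smul_one]; positivity) _
  have hA6pos : 0 < ((2 * Real.pi) ^ d * (σw ^ 2 • (Bw σw σy k xs)⁻¹).det) ^ (-(1:ℝ)/2) := by
    apply Real.rpow_pos_of_pos
    rw [hdet6]
    have hpi2 : (0:ℝ) < 2 * Real.pi := by positivity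
    exact mul_pos (pow_pos hpi2 d)
      (mul_pos (pow_pos (by positivity) d) (inv_pos.mpr hdetB))
  have hSpos : 0 < ∑ l, πc l * cMu σμ σx (μc l) k xs * cW σw σy (wc l) k xs ys := by
    apply Finset.sum_pos
    · intro l _
      have h1 : 0 < cMu σμ σx (μc l) k xs := by simp only [cMu]; exact Real.exp_pos _
      have h2 : 0 < cW σw σy (wc l) k xs ys := by simp only [cW]; exact Real.exp_pos _
      exact mul_pos (mul_pos (hπ l).1 h1) h2
    · exact ⟨⟨0, hM⟩, Finset.mem_univ _⟩
  refine ⟨(((2 * Real.pi) ^ d * (σμ ^ 2 • (1 : Matrix (Fin d) (Fin d) ℝ)).det) ^ (-(1:ℝ)/2) * ((2 * Real.pi) ^ d * (σw ^ 2 • (1 : Matrix (Fin d) (Fin d) ℝ)).det) ^ (-(1:ℝ)/2) * (((2 * Real.pi) ^ d * (σx ^ 2 • (1 : Matrix (Fin d) (Fin d) ℝ)).det) ^ (-(1:ℝ)/2)) ^ (k+1) * ((2 * Real.pi * σy ^ 2) ^ (-(1:ℝ)/2)) ^ k * (((2 * Real.pi) ^ d * ((σμ ^ 2 * (1 + ((k:ℝ)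 + 1) * (σμ ^ 2 / σx ^ 2))⁻¹) • (1 : Matrix (Fin d) (Fin d) ℝ)).det) ^ (-(1:ℝ)/2))⁻¹ * (((2 * Real.pi) ^ d * (σw ^ 2 • (Bw σw σy k xs)⁻¹).det) ^ (-(1:ℝ)/2))⁻¹ * Real.exp (-(((σx ^ 2)⁻¹ * ∑ i, xs i ⬝ᵥ xs i)/2) + -(∑ i : Fin k, (ys i)^2/(2 * σy ^ 2)))) * (∑ l, πc l * cMu σμ σx (μc l) k xs * cW σw σy (wc l) k xs ys), ?_, ?_⟩
  · exact mul_pos (mul_pos (mul_pos (mul_pos (mul_pos (mul_pos (mul_pos hA1pos hA2pos)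
      (pow_pos hA3pos _)) (pow_pos hA4pos _)) (inv_pos.mpr hA5pos)) (inv_pos.mpr hA6pos))
      (Real.exp_pos _)) hSpos
  intro μ w
  rw [Finset.mul_sum]
  refine Finset.sum_congr rfl fun m _ => ?_
  have hpiT : piTilde πc μc wc σμ σw σx σy k xs ys m
      = (πc m * cMu σμ σx (μc m) k xs * cW σw σy (wc m) k xs ys) / (∑ l, πc l * cMu σμ σx (μc l) k xs * cW σw σy (wc l) k xs ys) := rfl
  rw [hpiT, aux_Zsplit _ _ _ _ _ (ne_of_gt hSpos)]
  have hprodx : ∏ i, mvnPDF (xs i) μ (σx ^ 2 • 1)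
      = (((2 * Real.pi) ^ d * (σx ^ 2 • (1 : Matrix (Fin d) (Fin d) ℝ)).det) ^ (-(1:ℝ)/2)) ^ (k+1) *
        Real.exp (-(∑ i, ((σx ^ 2)⁻¹ * ((xs i - μ) ⬝ᵥ (xs i - μ)))/2)) := by
    rw [Finset.prod_congr rfl fun i _ => aux_mvn_smul_one (xs i) μ (σx ^ 2) hσxne]
    rw [Finset.prod_mul_distrib, Finset.prod_const, Finset.card_univ, Fintype.card_fin,
      ← Real.exp_sum]
    congr 1
    rw [← Finset.sum_neg_distrib]
    exact congrArg Real.exp (Finset.sum_congr rfl fun i _ => by ring)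
  have hprody : ∏ i : Fin k, normalPDF (ys i) (w ⬝ᵥ xs i.castSucc) (σy ^ 2)
      = ((2 * Real.pi * σy ^ 2) ^ (-(1:ℝ)/2)) ^ k *
        Real.exp (-(∑ i : Fin k, (ys i - w ⬝ᵥ xs i.castSucc)^2/(2 * σy ^ 2))) := by
    simp only [normalPDF]
    rw [Finset.prod_mul_distrib, Finset.prod_const, Finset.card_univ, Fintype.card_fin,
      ← Real.exp_sum]
    congr 1
    rw [← Finset.sum_neg_distrib]
    exact congrArg Real.exp (Finset.sum_congr rfl fun i _ => by ring)
  have hμt : muTilde σμ σx (μc m) k xs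
      = (1 + ((k:ℝ) + 1) * (σμ ^ 2 / σx ^ 2))⁻¹ • (μc m + (σμ ^ 2 / σx ^ 2) • ∑ i, xs i) := by
    simp only [muTilde]; rw [hvm]
  have hcMu : cMu σμ σx (μc m) k xs
      = Real.exp (-((μc m ⬝ᵥ μc m) - (1 + ((k:ℝ) + 1) * (σμ ^ 2 / σx ^ 2))⁻¹ *
          ((μc m + (σμ ^ 2 / σx ^ 2) • ∑ i, xs i) ⬝ᵥ
            (μc m + (σμ ^ 2 / σx ^ 2) • ∑ i, xs i))) / (2 * σμ ^ 2)) := by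
    simp only [cMu, sqnorm]; rw [hvm]
  have hcW : cW σw σy (wc m) k xs ys
      = Real.exp (-((wc m ⬝ᵥ wc m) -
          (wc m + (σw ^ 2 / σy ^ 2) • ∑ i : Fin k, ys i • xs i.castSucc) ⬝ᵥ
            wTilde σw σy (wc m) k xs ys) / (2 * σw ^ 2)) := by
    simp only [cW, sqnorm]
    rw [hww, ← hwtEq (wc m)]
  have hP2 : mvnPDF w (wTilde σw σy (wc m) k xs ys) (σw ^ 2 • (Bw σw σy k xs)⁻¹)
      = (((2 * Real.pi) ^ d * (σw ^ 2 • (Bw σw σy k xs)⁻¹).det) ^ (-(1:ℝ)/2)) * Real.exp (-((σw ^ 2)⁻¹ *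
          ((w - wTilde σw σy (wc m) k xs ys) ⬝ᵥ
            (Bw σw σy k xs *ᵥ (w - wTilde σw σy (wc m) k xs ys))))/2) := by
    simp only [mvnPDF]
    rw [hinv2, Matrix.smul_mulVec, dotProduct_smul, smul_eq_mul]
  rw [aux_mvn_smul_one μ (μc m) (σμ ^ 2) hσμne, aux_mvn_smul_one w (wc m) (σw ^ 2) hσwne,
    hprodx, hprody, hμt,
    aux_mvn_smul_one μ
      ((1 + ((k:ℝ) + 1) * (σμ ^ 2 / σx ^ 2))⁻¹ • (μc m + (σμ ^ 2 / σx ^ 2) • ∑ i, xs i))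
      (σμ ^ 2 * (1 + ((k:ℝ) + 1) * (σμ ^ 2 / σx ^ 2))⁻¹) hsne,
    hP2, hcMu, hcW]
  refine aux_combine _ _ _ _ _ _ _ _ _ _ _ _ _ _ _ _ (ne_of_gt hA5pos) (ne_of_gt hA6pos) ?_
  linear_combination (-1 : ℝ) * aux_Imu d k σμ σx (ne_of_gt hσμ) (ne_of_gt hσx) μ (μc m) xs
    - aux_Iw d k σw σy (ne_of_gt hσw) (ne_of_gt hσy) w (wc m)
        (wTilde σw σy (wc m) k xs ys) xs ys (Bw σw σy k xs) hBapp (hwtu (wc m))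
end
end

section
/- (Closed form of the w-part of the component re-weighting ratio.) Let α, β ∈ {1,…,M} and suppose the labels are noiseless linear: y_i = ⟨x_i, w*⟩ for all i = 1,…,k, for some w* ∈ ℝ^d. Then log(c^w_α / c^w_β) = (‖w_β − w*‖²_{I − (I + kδ_w Σ̄_w)^{−1}} − ‖w_α − w*‖²_{I − (I + kδ_w Σ̄_w)^{−1}}) / (2σ_w²). -/
open MeasureTheory ProbabilityTheory Matrix Filter Topology
open scoped NNReal ENNReal

noncomputable section

open ICL


section Helpers

lemma myVecMulVec_mulVec {d : ℕ} (v w x : Fin d → ℝ) :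
    (vecMulVec v w).mulVec x = (dotProduct w x) • v := by
  ext j
  simp [mulVec, dotProduct, vecMulVec_apply, Finset.mul_sum, mul_comm, mul_left_comm]

lemma mySum_mulVec {d n : ℕ} (A : Fin n → Matrix (Fin d) (Fin d) ℝ) (x : Fin d → ℝ) :
    (∑ i, A i).mulVec x = ∑ i, (A i).mulVec x := by
  ext j
  simp [mulVec, dotProduct, Matrix.sum_apply, Finset.sum_mul]
  rw [Finset.sum_comm]

lemma mySmul_mulVec {d : ℕ} (r : ℝ) (A : Matrix (Fin d) (Fin d) ℝ) (x : Fin d → ℝ) :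
    (r • A).mulVec x = r • A.mulVec x := by
  ext j; simp [mulVec, dotProduct, Finset.mul_sum, mul_assoc]

lemma myDotProduct_sum {d n : ℕ} (x : Fin d → ℝ) (f : Fin n → Fin d → ℝ) :
    dotProduct x (∑ i, f i) = ∑ i, dotProduct x (f i) := by
  simp only [dotProduct, Finset.sum_apply, Finset.mul_sum]
  rw [Finset.sum_comm]

lemma psd_scaled_sum {d n : ℕ} (r : ℝ) (hr : 0 ≤ r) (v : Fin n → Fin d → ℝ) :
    (r • ∑ i, vecMulVec (v i) (v i) : Matrix (Fin d) (Fin d) ℝ).PosSemidef := by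
  rw [Matrix.posSemidef_iff_dotProduct_mulVec]
  constructor
  · ext i j
    simp [Matrix.conjTranspose_apply, Matrix.sum_apply, vecMulVec_apply, mul_comm]
  · intro x
    rw [mySmul_mulVec, mySum_mulVec]
    simp only [star_trivial, dotProduct_smul, smul_eq_mul]
    have h : dotProduct x (∑ i, (vecMulVec (v i) (v i)).mulVec x)
        = ∑ i, (dotProduct (v i) x)^2 := by
      rw [myDotProduct_sum]
      refine Finset.sum_congr rfl fun i _ => ?_
      rw [myVecMulVec_mulVec, dotProduct_smul, smul_eq_mul, dotProduct_comm]
      ring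
    rw [h]
    positivity

lemma myDot_symm {d : ℕ} (M : Matrix (Fin d) (Fin d) ℝ) (hM : M.IsHermitian)
    (u z : Fin d → ℝ) :
    dotProduct u (M.mulVec z) = dotProduct (M.mulVec u) z := by
  have hMT : Mᵀ = M := by
    ext i j
    have := congrFun (congrFun hM i) j
    simpa [Matrix.conjTranspose_apply] using this
  rw [Matrix.dotProduct_mulVec, ← Matrix.mulVec_transpose, hMT]

end Helpers

/-- (Closed form of the w-part of the component re-weighting
ratio), under noiseless linear labels `y_i = ⟨x_i, w*⟩`. -/
theorem psi_w_closed_form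
    (d M k : ℕ) (hd : 0 < d) (hM : 0 < M)
    (wc : Fin M → Fin d → ℝ)
    (σw σy : ℝ) (hσw : 0 < σw) (hσy : 0 < σy)
    (xs : Fin (k + 1) → Fin d → ℝ) (ys : Fin k → ℝ) (wstar : Fin d → ℝ)
    (hys : ∀ i : Fin k, ys i = dotProduct (xs i.castSucc) wstar)
    (α β : Fin M) :
    Real.log (cW σw σy (wc α) k xs ys / cW σw σy (wc β) k xs ys) =
      (dotProduct (wc β - wstar) ((1 - (Bw σw σy k xs)⁻¹).mulVec (wc β - wstar)) -
        dotProduct (wc α - wstar) ((1 - (Bw σw σy k xs)⁻¹).mulVec (wc α - wstar))) /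
      (2 * σw ^ 2) := by
  have hσ : σw ^ 2 ≠ 0 := by positivity
  have hpsd : ((((k : ℝ) * (σw ^ 2 / σy ^ 2))) • barSigma k xs).PosSemidef := by
    rw [barSigma, smul_smul]
    exact psd_scaled_sum _ (by positivity) _
  have hBpd : (Bw σw σy k xs).PosDef := by
    rw [Bw]; exact Matrix.PosDef.add_posSemidef Matrix.PosDef.one hpsd
  have hBunit : IsUnit (Bw σw σy k xs).det := hBpd.det_pos.ne'.isUnit
  have hinvmul : (Bw σw σy k xs)⁻¹ * (Bw σw σy k xs) = 1 :=
    Matrix.nonsing_inv_mul _ hBunit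
  have hinvherm : ((Bw σw σy k xs)⁻¹).IsHermitian := hBpd.isHermitian.inv
  have h1 : ∀ z : Fin d → ℝ,
      (Bw σw σy k xs)⁻¹.mulVec ((Bw σw σy k xs).mulVec z) = z := by
    intro z; rw [Matrix.mulVec_mulVec, hinvmul, Matrix.one_mulVec]
  have hwbar : (((k : ℝ) * (σw ^ 2 / σy ^ 2))) • wbar k xs ys
      = ((((k : ℝ) * (σw ^ 2 / σy ^ 2))) • barSigma k xs).mulVec wstar := by
    rw [wbar, barSigma, mySmul_mulVec, mySmul_mulVec, mySum_mulVec]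
    congr 2
    refine Finset.sum_congr rfl fun i _ => ?_
    rw [myVecMulVec_mulVec, hys i]
  have expand : ∀ w : Fin d → ℝ,
      sqnorm w - dotProduct (w + (((k : ℝ) * (σw ^ 2 / σy ^ 2))) • wbar k xs ys)
        ((Bw σw σy k xs)⁻¹.mulVec
          (w + (((k : ℝ) * (σw ^ 2 / σy ^ 2))) • wbar k xs ys))
      = dotProduct (w - wstar) ((1 - (Bw σw σy k xs)⁻¹).mulVec (w - wstar))
        + (sqnorm wstar - dotProduct wstar ((Bw σw σy k xs).mulVec wstar)) := by
    intro w
    have hBm1 : (((k : ℝ) * (σw ^ 2 / σy ^ 2))) • barSigma k xs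
        = Bw σw σy k xs - 1 := by
      rw [Bw]; exact (add_sub_cancel_left 1 _).symm
    have hw : w + (((k : ℝ) * (σw ^ 2 / σy ^ 2))) • wbar k xs ys
        = (w - wstar) + (Bw σw σy k xs).mulVec wstar := by
      rw [hwbar, hBm1, Matrix.sub_mulVec, Matrix.one_mulVec]; abel
    have hwdecomp : sqnorm w = dotProduct ((w - wstar) + wstar) ((w - wstar) + wstar) := by
      rw [sqnorm, sub_add_cancel]
    have hcross : dotProduct ((Bw σw σy k xs).mulVec wstar)
        ((Bw σw σy k xs)⁻¹.mulVec (w - wstar)) = dotProduct (w - wstar) wstar := by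
      rw [myDot_symm _ hinvherm, h1, dotProduct_comm]
    have hcross2 : dotProduct ((Bw σw σy k xs).mulVec wstar) wstar
        = dotProduct wstar ((Bw σw σy k xs).mulVec wstar) := dotProduct_comm _ _
    have hws : dotProduct wstar w = dotProduct (w - wstar) wstar + dotProduct wstar wstar := by
      rw [dotProduct_comm (w - wstar) wstar, ← dotProduct_add, sub_add_cancel]
    rw [hw, hwdecomp]
    simp only [Matrix.mulVec_add, Matrix.sub_mulVec, Matrix.one_mulVec, h1,
      dotProduct_add, add_dotProduct, dotProduct_sub, sqnorm, hcross, hcross2, hws]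
    ring
  rw [cW, cW, ← Real.exp_sub, Real.log_exp, expand (wc α), expand (wc β)]
  ring
end
end

section
/- (Almost-sure limit of the μ-part of the re-weighting ratio.) Let α, β ∈ {1,…,M} with ‖μ_α‖ = ‖μ_β‖, and let x_1, x_2, … be i.i.d. N(μ*, τ_x² I_d) random vectors with τ_x > 0. For each k ≥ 0 let Ψ^{(k)}_μ(α,β) = log(c^μ_α / c^μ_β) computed from x_1,…,x_{k+1}. Then almost surely lim_{k→∞} Ψ^{(k)}_μ(α,β) = (‖μ_β − μ*‖² − ‖μ_α − μ*‖²)/(2σ_μ²). -/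
open MeasureTheory ProbabilityTheory Matrix Filter Topology
open scoped NNReal ENNReal

noncomputable section

open ICL
section AuxGauss
open Real
lemma aux_integrable_mul_pdf (m : ℝ) {v : ℝ≥0} (hv : v ≠ 0) :
    Integrable (fun x : ℝ => x * gaussianPDFReal m v x) := by
  have hv' : (0:ℝ) < v := lt_of_le_of_ne v.coe_nonneg (by exact_mod_cast hv.symm)
  have hb : (0:ℝ) < (2 * (v:ℝ))⁻¹ := by positivity
  have h1 : Integrable (fun x : ℝ => (x - m) * rexp (-(2*(v:ℝ))⁻¹ * (x - m)^2)) :=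
    (integrable_mul_exp_neg_mul_sq hb).comp_sub_right m
  have h2 : Integrable (fun x : ℝ => m * rexp (-(2*(v:ℝ))⁻¹ * (x - m)^2)) :=
    (((integrable_exp_neg_mul_sq hb).comp_sub_right m).const_mul m)
  have h3 : Integrable (fun x : ℝ => x * rexp (-(2*(v:ℝ))⁻¹ * (x - m)^2)) := by
    have h4 := h1.add h2
    have he : (fun x : ℝ => (x - m) * rexp (-(2*(v:ℝ))⁻¹ * (x - m)^2)
        + m * rexp (-(2*(v:ℝ))⁻¹ * (x - m)^2))
        = fun x : ℝ => x * rexp (-(2*(v:ℝ))⁻¹ * (x - m)^2) := by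
      funext x; ring
    rw [← he]; exact h4
  have h5 := h3.const_mul (√(2 * π * (v:ℝ)))⁻¹
  have he2 : (fun x : ℝ => (√(2 * π * (v:ℝ)))⁻¹ * (x * rexp (-(2*(v:ℝ))⁻¹ * (x - m)^2)))
      = fun x : ℝ => x * gaussianPDFReal m v x := by
    funext x
    unfold gaussianPDFReal
    rw [show -(x - m)^2 / (2*(v:ℝ)) = -(2*(v:ℝ))⁻¹ * (x - m)^2 by
      rw [neg_div, neg_mul, inv_mul_eq_div]]
    ring
  rw [← he2]; exact h5

lemma aux_integrable_id_gaussianReal (m : ℝ) (v : ℝ≥0) :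
    Integrable (id : ℝ → ℝ) (gaussianReal m v) := by
  by_cases hv : v = 0
  · subst hv
    rw [gaussianReal_zero_var]
    exact (integrable_const (id m)).congr (ae_eq_dirac id).symm
  · rw [gaussianReal_of_var_ne_zero m hv]
    rw [gaussianPDF_def]
    rw [integrable_withDensity_iff (by exact (measurable_gaussianPDFReal m v).ennreal_ofReal)
      (ae_of_all _ fun x => ENNReal.ofReal_lt_top)]
    simp only [id]
    have := aux_integrable_mul_pdf m hv
    refine this.congr (ae_of_all _ fun x => ?_)
    simp only [ENNReal.toReal_ofReal (gaussianPDFReal_nonneg m v x), smul_eq_mul, mul_comm]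

lemma aux_integral_odd_zero : ∀ {v : ℝ≥0}, v ≠ 0 →
    ∫ x : ℝ, x * gaussianPDFReal 0 v x = 0 := by
  intro v hv
  have hsym : ∀ x : ℝ, gaussianPDFReal 0 v (-x) = gaussianPDFReal 0 v x := by
    intro x; unfold gaussianPDFReal; ring_nf
  have h := integral_neg_eq_self (fun x : ℝ => x * gaussianPDFReal 0 v x) volume
  have h2 : ∫ x : ℝ, (-x) * gaussianPDFReal 0 v (-x) = ∫ x : ℝ, x * gaussianPDFReal 0 v x := h
  simp only [hsym] at h2
  have h3 : ∫ x : ℝ, (-x) * gaussianPDFReal 0 v x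
      = -∫ x : ℝ, x * gaussianPDFReal 0 v x := by
    rw [← integral_neg]; congr 1; funext x; ring
  linarith [h2, h3.symm ▸ h2]

lemma aux_integral_id_gaussianReal (m : ℝ) (v : ℝ≥0) :
    ∫ x, x ∂(gaussianReal m v) = m := by
  by_cases hv : v = 0
  · simp [hv, gaussianReal_zero_var, integral_dirac]
  · rw [gaussianReal_of_var_ne_zero m hv, gaussianPDF_def]
    have hmeas : Measurable fun x : ℝ => (gaussianPDFReal m v x).toNNReal :=
      (measurable_gaussianPDFReal m v).real_toNNReal
    have : (fun x : ℝ => ENNReal.ofReal (gaussianPDFReal m v x))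
        = fun x : ℝ => ((gaussianPDFReal m v x).toNNReal : ℝ≥0∞) := rfl
    rw [this, integral_withDensity_eq_integral_smul hmeas]
    simp only [NNReal.smul_def, NNReal.coe_mk, smul_eq_mul,
      Real.coe_toNNReal _ (gaussianPDFReal_nonneg m v _)]
    have key : ∀ x : ℝ, gaussianPDFReal m v x * x
        = (x - m) * gaussianPDFReal 0 v (x - m) + m * gaussianPDFReal m v x := by
      intro x
      rw [show gaussianPDFReal 0 v (x - m) = gaussianPDFReal m v x by
        rw [gaussianPDFReal_sub, zero_add]]
      ring
    rw [show (fun x : ℝ => gaussianPDFReal m v x * x)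
        = fun x : ℝ => (x - m) * gaussianPDFReal 0 v (x - m) + m * gaussianPDFReal m v x
      from funext key]
    rw [integral_add]
    · rw [integral_sub_right_eq_self (μ := volume) (fun x : ℝ => x * gaussianPDFReal 0 v x) m]
      rw [aux_integral_odd_zero hv, integral_const_mul, integral_gaussianPDFReal_eq_one m hv]
      ring
    · exact (aux_integrable_mul_pdf 0 hv).comp_sub_right m
    · exact (integrable_gaussianPDFReal m v).const_mul m


lemma aux_map_eval_pi {ι : Type*} [Fintype ι] {α : ι → Type*} [∀ i, MeasurableSpace (α i)]
    (μ : ∀ i, Measure (α i)) [∀ i, IsProbabilityMeasure (μ i)] (j : ι) :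
    (Measure.pi μ).map (Function.eval j) = μ j := by
  classical
  ext s hs
  rw [Measure.map_apply (measurable_pi_apply j) hs, Set.eval_preimage, Measure.pi_pi]
  rw [Finset.prod_eq_single_of_mem j (Finset.mem_univ j)]
  · rw [Function.update_self]
  · intro i _ hij
    rw [Function.update_of_ne hij]
    exact measure_univ

end AuxGauss

lemma aux_sqnorm_add_smul {d : ℕ} (u w : Fin d → ℝ) (c : ℝ) :
    sqnorm (u + c • w) = sqnorm u + 2 * c * dotProduct u w + c ^ 2 * sqnorm w := by
  simp only [sqnorm, add_dotProduct, dotProduct_add, smul_dotProduct,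
    dotProduct_smul, smul_eq_mul, dotProduct_comm w u]
  ring

lemma aux_sqnorm_sub {d : ℕ} (u w : Fin d → ℝ) :
    sqnorm (u - w) = sqnorm u - 2 * dotProduct u w + sqnorm w := by
  simp only [sqnorm, sub_dotProduct, dotProduct_sub, dotProduct_comm w u]
  ring

lemma aux_log_cMu_ratio {d : ℕ} {σμ σx : ℝ} (hσμ : σμ ≠ 0) (μa μb : Fin d → ℝ)
    (hnorm : sqnorm μa = sqnorm μb) (k : ℕ) (xs : Fin (k + 1) → Fin d → ℝ)
    (ht : (1 : ℝ) + ((k : ℝ) + 1) * (σμ ^ 2 / σx ^ 2) ≠ 0) :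
    Real.log (cMu σμ σx μa k xs / cMu σμ σx μb k xs)
      = ((k : ℝ) + 1) * (σμ ^ 2 / σx ^ 2) * (1 + ((k : ℝ) + 1) * (σμ ^ 2 / σx ^ 2))⁻¹ *
          dotProduct (μa - μb) (mbar k xs) / σμ ^ 2 := by
  unfold cMu
  rw [← Real.exp_sub, Real.log_exp, aux_sqnorm_add_smul, aux_sqnorm_add_smul, hnorm,
    sub_dotProduct]
  generalize hgen : σμ ^ 2 / σx ^ 2 = δ at ht ⊢
  field_simp
  ring


/-- Almost-sure limit of the μ-part of the re-weighting
ratio: a.s. `Ψ^{(k)}_μ(α,β) → (‖μ_β − μ*‖² − ‖μ_α − μ*‖²)/(2σ_μ²)`. -/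
theorem psi_mu_limit
    {Ω : Type*} [MeasurableSpace Ω] (P : Measure Ω) [IsProbabilityMeasure P]
    (d M : ℕ) (hd : 0 < d) (hM : 0 < M)
    (μc : Fin M → Fin d → ℝ)
    (σμ σx τx : ℝ) (hσμ : 0 < σμ) (hσx : 0 < σx) (hτx : 0 < τx)
    (μstar : Fin d → ℝ)
    (α β : Fin M) (hnorm : sqnorm (μc α) = sqnorm (μc β))
    (X : ℕ → Ω → Fin d → ℝ) (hXmeas : ∀ i, Measurable (X i))
    (hXindep : ProbabilityTheory.iIndepFun X P)
    (hXdist : ∀ i, Measure.map (X i) P = gaussianVec d μstar ⟨τx ^ 2, sq_nonneg τx⟩) :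
    ∀ᵐ ω ∂P,
      Filter.Tendsto
        (fun k : ℕ =>
          Real.log (cMu σμ σx (μc α) k (fun i : Fin (k + 1) => X i ω) /
            cMu σμ σx (μc β) k (fun i : Fin (k + 1) => X i ω)))
        Filter.atTop
        (nhds ((sqnorm (μc β - μstar) - sqnorm (μc α - μstar)) / (2 * σμ ^ 2))) := by
  have hσμ' : σμ ≠ 0 := hσμ.ne'
  set v : ℝ≥0 := ⟨τx ^ 2, sq_nonneg τx⟩ with hv
  have hY : ∀ j : Fin d, ∀ᵐ ω ∂P,
      Tendsto (fun n : ℕ => (∑ i ∈ Finset.range n, X i ω j) / n) atTop (𝓝 (μstar j)) := by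
    intro j
    have hmeas : ∀ i, Measurable fun ω => X i ω j :=
      fun i => (measurable_pi_apply j).comp (hXmeas i)
    have hmap : ∀ i, Measure.map (fun ω => X i ω j) P = gaussianReal (μstar j) v := by
      intro i
      have h1 : (fun ω => X i ω j) = Function.eval j ∘ X i := rfl
      rw [h1, ← Measure.map_map (measurable_pi_apply j) (hXmeas i), hXdist i]
      exact aux_map_eval_pi (fun i => gaussianReal (μstar i) v) j
    have hint : Integrable (fun ω => X 0 ω j) P := by
      have h2 := aux_integrable_id_gaussianReal (μstar j) v
      rw [← hmap 0] at h2
      exact (integrable_map_measure h2.aestronglyMeasurable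
        (hmeas 0).aemeasurable).mp h2
    have hindep : Pairwise (Function.onFun (IndepFun · · P) fun i => fun ω => X i ω j) :=
      fun i i' hii' =>
        (hXindep.comp (fun _ => Function.eval j) fun _ => measurable_pi_apply j).indepFun hii'
    have hident : ∀ i, IdentDistrib (fun ω => X i ω j) (fun ω => X 0 ω j) P P :=
      fun i => ⟨(hmeas i).aemeasurable, (hmeas 0).aemeasurable, by rw [hmap i, hmap 0]⟩
    have hSLLN := strong_law_ae_real _ hint hindep hident
    have hmean : (∫ ω, X 0 ω j ∂P) = μstar j := by
      have h3 : ∫ x, x ∂(Measure.map (fun ω => X 0 ω j) P) = ∫ ω, X 0 ω j ∂P :=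
        integral_map (hmeas 0).aemeasurable aestronglyMeasurable_id
      rw [← h3, hmap 0, aux_integral_id_gaussianReal]
    rwa [hmean] at hSLLN
  have hall : ∀ᵐ ω ∂P, ∀ j : Fin d,
      Tendsto (fun n : ℕ => (∑ i ∈ Finset.range n, X i ω j) / n) atTop (𝓝 (μstar j)) :=
    (ae_all_iff).mpr hY
  filter_upwards [hall] with ω hω
  have hδ : (0 : ℝ) < σμ ^ 2 / σx ^ 2 := by positivity
  have hmbar : ∀ j : Fin d,
      Tendsto (fun k : ℕ => mbar k (fun i : Fin (k + 1) => X i ω) j) atTop (𝓝 (μstar j)) := by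
    intro j
    have h1 := (hω j).comp (tendsto_add_atTop_nat 1)
    refine h1.congr fun k => ?_
    simp only [Function.comp_apply, mbar, Pi.smul_apply, Finset.sum_apply, smul_eq_mul]
    push_cast
    rw [div_eq_inv_mul]
    congr 1
    exact (Fin.sum_univ_eq_sum_range (fun i => X i ω j) (k + 1)).symm
  have hdot : Tendsto
      (fun k : ℕ => dotProduct (μc α - μc β) (mbar k (fun i : Fin (k + 1) => X i ω)))
      atTop (𝓝 (dotProduct (μc α - μc β) μstar)) := by
    refine tendsto_finset_sum _ fun j _ => ?_
    exact tendsto_const_nhds.mul (hmbar j)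
  have ht : ∀ k : ℕ, (0 : ℝ) < 1 + ((k : ℝ) + 1) * (σμ ^ 2 / σx ^ 2) := fun k => by positivity
  have ha : Tendsto
      (fun k : ℕ => ((k : ℝ) + 1) * (σμ ^ 2 / σx ^ 2) *
        (1 + ((k : ℝ) + 1) * (σμ ^ 2 / σx ^ 2))⁻¹) atTop (𝓝 1) := by
    have h0 : Tendsto (fun k : ℕ => 1 + ((k : ℝ) + 1) * (σμ ^ 2 / σx ^ 2)) atTop atTop :=
      tendsto_atTop_add_const_left _ 1
        ((tendsto_atTop_add_const_right _ 1 (tendsto_natCast_atTop_atTop (R := ℝ))).atTop_mul_const hδ)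
    have h1 : Tendsto (fun k : ℕ => (1 + ((k : ℝ) + 1) * (σμ ^ 2 / σx ^ 2))⁻¹) atTop (𝓝 0) :=
      tendsto_inv_atTop_zero.comp h0
    have h2 : Tendsto (fun k : ℕ => 1 - (1 + ((k : ℝ) + 1) * (σμ ^ 2 / σx ^ 2))⁻¹)
        atTop (𝓝 (1 - 0)) := tendsto_const_nhds.sub h1
    rw [sub_zero] at h2
    refine h2.congr fun k => ?_
    have h3 := (ht k).ne'
    field_simp
    ring
  have hmain := (ha.mul hdot).div_const (σμ ^ 2)
  rw [one_mul] at hmain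
  have hlim : (sqnorm (μc β - μstar) - sqnorm (μc α - μstar)) / (2 * σμ ^ 2)
      = dotProduct (μc α - μc β) μstar / σμ ^ 2 := by
    rw [aux_sqnorm_sub, aux_sqnorm_sub, hnorm, sub_dotProduct]
    field_simp
    ring
  rw [hlim]
  refine hmain.congr fun k => ?_
  exact (aux_log_cMu_ratio hσμ' (μc α) (μc β) hnorm k (fun i : Fin (k + 1) => X i ω)
    (ht k).ne').symm
end
end

section
/- (Small-prior-noise limit of the re-weighting exponent.) Let α, β ∈ {1,…,M} with ‖μ_α‖ = ‖μ_β‖, fix data x_1,…,x_{k+1} ∈ ℝ^d and labels y_i = ⟨x_i, w*⟩ (i = 1,…,k) for some w* ∈ ℝ^d, and hold σ_x, σ_y > 0 fixed. Regarding Ψ_μ(α,β) + Ψ_w(α,β) as a function of (σ_μ, σ_w) ∈ (0,∞)², one has lim_{(σ_μ,σ_w)→(0⁺,0⁺)} (Ψ_μ(α,β) + Ψ_w(α,β)) = (‖μ_β − x_{k+1}‖² − ‖μ_α − x_{k+1}‖²)/(2σ_x²) + Σ_{i=1}^k [ (‖μ_β − x_i‖² − ‖μ_α − x_i‖²)/(2σ_x²)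 + ((⟨x_i, w_β⟩ − ⟨x_i, w*⟩)² − (⟨x_i, w_α⟩ − ⟨x_i, w*⟩)²)/(2σ_y²) ]. -/
open MeasureTheory ProbabilityTheory Matrix Filter Topology
open scoped NNReal ENNReal

noncomputable section

open ICL

namespace ICLAux
open ICL

variable {d k : ℕ}

lemma sum_mulVec {I : Type*} (s : Finset I) (f : I → Matrix (Fin d) (Fin d) ℝ) (u : Fin d → ℝ) :
    (∑ i ∈ s, f i).mulVec u = ∑ i ∈ s, (f i).mulVec u := by
  ext j
  simp [mulVec, dotProduct, Matrix.sum_apply, Finset.sum_mul]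
  rw [Finset.sum_comm]

lemma dotProduct_finsum {I : Type*} (u : Fin d → ℝ) (s : Finset I) (f : I → Fin d → ℝ) :
    u ⬝ᵥ (∑ i ∈ s, f i) = ∑ i ∈ s, u ⬝ᵥ f i := by
  simp [dotProduct, Finset.sum_apply, Finset.mul_sum]
  rw [Finset.sum_comm]

lemma vecMulVec_mulVec (v u : Fin d → ℝ) :
    (vecMulVec v v).mulVec u = (v ⬝ᵥ u) • v := by
  ext j
  simp [vecMulVec_apply, mulVec, dotProduct, Finset.sum_mul, Finset.mul_sum]
  refine Finset.sum_congr rfl fun i _ => by ring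

lemma sqnorm_add_smul (u v : Fin d → ℝ) (c : ℝ) :
    (u + c • v) ⬝ᵥ (u + c • v) = u ⬝ᵥ u + 2*c*(u ⬝ᵥ v) + c^2 * (v ⬝ᵥ v) := by
  simp [dotProduct_add, add_dotProduct, dotProduct_smul, smul_dotProduct, dotProduct_comm v u]
  ring

lemma sqnorm_sub' (u x : Fin d → ℝ) :
    (u - x) ⬝ᵥ (u - x) = u ⬝ᵥ u - 2*(u ⬝ᵥ x) + x ⬝ᵥ x := by
  simp [dotProduct_sub, sub_dotProduct, dotProduct_comm x u]
  ring

lemma barSigma_mulVec (xs : Fin (k+1) → Fin d → ℝ) (u : Fin d → ℝ) :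
    (barSigma k xs).mulVec u
      = (k:ℝ)⁻¹ • ∑ i : Fin k, (xs i.castSucc ⬝ᵥ u) • xs i.castSucc := by
  rw [barSigma, smul_mulVec, sum_mulVec]
  simp_rw [vecMulVec_mulVec]

lemma quad_barSigma (xs : Fin (k+1) → Fin d → ℝ) (u : Fin d → ℝ) :
    u ⬝ᵥ (barSigma k xs).mulVec u = (k:ℝ)⁻¹ * ∑ i : Fin k, (xs i.castSucc ⬝ᵥ u)^2 := by
  rw [barSigma_mulVec, dotProduct_smul, smul_eq_mul]
  congr 1
  rw [dotProduct]
  simp only [Finset.sum_apply, Pi.smul_apply, smul_eq_mul, Finset.mul_sum]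
  rw [Finset.sum_comm]
  refine Finset.sum_congr rfl fun i _ => ?_
  have hx : ∀ x, u x * (xs i.castSucc ⬝ᵥ u * xs i.castSucc x)
      = (xs i.castSucc ⬝ᵥ u) * (u x * xs i.castSucc x) := fun x => by ring
  rw [Finset.sum_congr rfl fun x _ => hx x, ← Finset.mul_sum, ← dotProduct,
    dotProduct_comm u, sq]

lemma Bw_mulVec (σw σy : ℝ) (xs : Fin (k+1) → Fin d → ℝ) (u : Fin d → ℝ) :
    (Bw σw σy k xs).mulVec u = u + ((k:ℝ) * (σw^2/σy^2)) • (barSigma k xs).mulVec u := by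
  rw [Bw, add_mulVec, one_mulVec, smul_mulVec]

lemma Bw_posDef (σw σy : ℝ) (xs : Fin (k+1) → Fin d → ℝ) :
    (Bw σw σy k xs).PosDef := by
  rw [Matrix.posDef_iff_dotProduct_mulVec]
  constructor
  · have h : (Bw σw σy k xs)ᵀ = Bw σw σy k xs := by
      ext i j
      simp [Bw, barSigma, Matrix.one_apply, vecMulVec_apply, Matrix.sum_apply, eq_comm,
        mul_comm]
    simpa [Matrix.IsHermitian, Matrix.conjTranspose_eq_transpose_of_trivial] using h
  · intro x hx
    rw [star_trivial, Bw_mulVec, dotProduct_add, dotProduct_smul, quad_barSigma]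
    have h1 : 0 < x ⬝ᵥ x := by
      have h2 : x ⬝ᵥ x ≠ 0 := by
        simpa [dotProduct_self_eq_zero] using hx
      have h3 : (0:ℝ) ≤ x ⬝ᵥ x := Finset.sum_nonneg fun i _ => mul_self_nonneg _
      exact lt_of_le_of_ne h3 (Ne.symm h2)
    have h4 : (0:ℝ) ≤ (k:ℝ) * (σw^2/σy^2) := by positivity
    have h5 : (0:ℝ) ≤ (k:ℝ)⁻¹ * ∑ i : Fin k, (xs i.castSucc ⬝ᵥ x)^2 := by positivity
    have := mul_nonneg h4 h5
    simp only [smul_eq_mul]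
    linarith

lemma Bw_det_ne (σw σy : ℝ) (xs : Fin (k+1) → Fin d → ℝ) :
    (Bw σw σy k xs).det ≠ 0 := (Bw_posDef σw σy xs).det_pos.ne'

lemma inv_quad_identity (σw σy : ℝ) (xs : Fin (k+1) → Fin d → ℝ) (v : Fin d → ℝ) :
    v ⬝ᵥ (Bw σw σy k xs)⁻¹.mulVec v
      = v ⬝ᵥ v - ((k:ℝ) * (σw^2/σy^2)) *
          (v ⬝ᵥ (barSigma k xs).mulVec ((Bw σw σy k xs)⁻¹.mulVec v)) := by
  set B := Bw σw σy k xs with hB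
  set u := B⁻¹.mulVec v with hu
  have hv : B.mulVec u = v := by
    rw [hu, Matrix.mulVec_mulVec, Matrix.mul_nonsing_inv _ (Ne.isUnit (Bw_det_ne σw σy xs)),
      Matrix.one_mulVec]
  have h1 : v ⬝ᵥ v = v ⬝ᵥ u + ((k:ℝ)*(σw^2/σy^2)) * (v ⬝ᵥ (barSigma k xs).mulVec u) := by
    have h2 : v ⬝ᵥ (B.mulVec u) = v ⬝ᵥ (u + ((k:ℝ)*(σw^2/σy^2)) • (barSigma k xs).mulVec u) := by
      rw [hB, Bw_mulVec]
    rw [hv] at h2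
    rw [h2, dotProduct_add, dotProduct_smul, smul_eq_mul]
  linarith

end ICLAux

open ICLAux

/-- Small-prior-noise limit of the re-weighting exponent:
with fixed data and noiseless linear labels, as `(σ_μ, σ_w) → (0⁺, 0⁺)` the sum
`Ψ_μ(α,β) + Ψ_w(α,β)` converges to the stated data-dependent limit. -/
theorem small_noise_limit_of_reweighting_exponent
    (d M k : ℕ) (hd : 0 < d) (hM : 0 < M)
    (μc wc : Fin M → Fin d → ℝ)
    (σx σy : ℝ) (hσx : 0 < σx) (hσy : 0 < σy)
    (xs : Fin (k + 1) → Fin d → ℝ) (ys : Fin k → ℝ) (wstar : Fin d → ℝ)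
    (hys : ∀ i : Fin k, ys i = dotProduct (xs i.castSucc) wstar)
    (α β : Fin M) (hnorm : sqnorm (μc α) = sqnorm (μc β)) :
    Filter.Tendsto
      (fun p : ℝ × ℝ =>
        Real.log (cMu p.1 σx (μc α) k xs / cMu p.1 σx (μc β) k xs) +
          Real.log (cW p.2 σy (wc α) k xs ys / cW p.2 σy (wc β) k xs ys))
      (nhdsWithin (0, 0) (Set.Ioi (0 : ℝ) ×ˢ Set.Ioi (0 : ℝ)))
      (nhds
        ((sqnorm (μc β - xs (Fin.last k)) - sqnorm (μc α - xs (Fin.last k))) /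
            (2 * σx ^ 2) +
          ∑ i : Fin k,
            ((sqnorm (μc β - xs i.castSucc) - sqnorm (μc α - xs i.castSucc)) /
                (2 * σx ^ 2) +
              ((dotProduct (xs i.castSucc) (wc β) -
                    dotProduct (xs i.castSucc) wstar) ^ 2 -
                (dotProduct (xs i.castSucc) (wc α) -
                    dotProduct (xs i.castSucc) wstar) ^ 2) / (2 * σy ^ 2)))) := by
  have hσx2 : (σx:ℝ)^2 ≠ 0 := pow_ne_zero _ hσx.ne'
  have hσy2 : (σy:ℝ)^2 ≠ 0 := pow_ne_zero _ hσy.ne'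
  set f : (Fin d → ℝ) → ℝ → ℝ := fun w b =>
    (w + ((k:ℝ)*(b^2/σy^2)) • wbar k xs ys) ⬝ᵥ (barSigma k xs).mulVec
      ((Bw b σy k xs)⁻¹.mulVec (w + ((k:ℝ)*(b^2/σy^2)) • wbar k xs ys)) with hf
  set G : ℝ × ℝ → ℝ := fun p =>
    ((k:ℝ)+1) * ((μc α - μc β) ⬝ᵥ mbar k xs) / ((1 + ((k:ℝ)+1) * (p.1^2/σx^2)) * σx^2)
    + (k:ℝ) * (2 * ((wc α - wc β) ⬝ᵥ wbar k xs ys) - f (wc α) p.2 + f (wc β) p.2) / (2*σy^2)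
    with hG
  have hn : μc α ⬝ᵥ μc α = μc β ⬝ᵥ μc β := hnorm
  -- pointwise identity on the set
  have hEq : ∀ p ∈ (Set.Ioi (0:ℝ) ×ˢ Set.Ioi (0:ℝ)),
      Real.log (cMu p.1 σx (μc α) k xs / cMu p.1 σx (μc β) k xs) +
        Real.log (cW p.2 σy (wc α) k xs ys / cW p.2 σy (wc β) k xs ys) = G p := by
    rintro ⟨a, b⟩ ⟨ha, hb⟩
    have ha0 : (a:ℝ) ≠ 0 := (Set.mem_Ioi.mp ha).ne'
    have hb0 : (b:ℝ) ≠ 0 := (Set.mem_Ioi.mp hb).ne'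
    have hden : (1 + ((k:ℝ)+1) * (a^2/σx^2)) ≠ 0 := by positivity
    rw [cMu, cMu, cW, cW, ← Real.exp_sub, Real.log_exp, ← Real.exp_sub, Real.log_exp]
    simp only [hG, hf]
    rw [inv_quad_identity, inv_quad_identity]
    simp only [sqnorm]
    rw [sqnorm_add_smul, sqnorm_add_smul, sqnorm_add_smul, sqnorm_add_smul,
      sub_dotProduct, sub_dotProduct, hn]
    field_simp
    ring
  -- continuity of G at (0,0)
  have hGc : ContinuousAt G (0, 0) := by
    have hBcont : Continuous fun b : ℝ => Bw b σy k xs := by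
      have hc : Continuous fun b : ℝ => (k:ℝ)*(b^2/σy^2) := by fun_prop
      exact continuous_const.add (hc.smul continuous_const)
    have hB1 : Bw 0 σy k xs = 1 := by rw [Bw]; norm_num
    have hdetinv : ContinuousAt (fun b : ℝ => (Bw b σy k xs)⁻¹) 0 := by
      have h1 : ContinuousAt Inv.inv (Bw 0 σy k xs) := by
        apply continuousAt_matrix_inv
        rw [Ring.inverse_eq_inv']
        exact continuousAt_inv₀ (Bw_det_ne 0 σy xs)
      have hBat : ContinuousAt (fun b : ℝ => Bw b σy k xs) 0 := hBcont.continuousAt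
      exact ContinuousAt.comp (x := (0:ℝ)) h1 hBat
    have hfcont : ∀ w : Fin d → ℝ, ContinuousAt (f w) 0 := by
      intro w
      have hv : Continuous fun b : ℝ => w + ((k:ℝ)*(b^2/σy^2)) • wbar k xs ys := by
        have hc : Continuous fun b : ℝ => (k:ℝ)*(b^2/σy^2) := by fun_prop
        exact continuous_const.add (hc.smul continuous_const)
      have hH : Continuous fun q : (Fin d → ℝ) × Matrix (Fin d) (Fin d) ℝ =>
          q.1 ⬝ᵥ (barSigma k xs).mulVec (q.2.mulVec q.1) := by
        exact (continuous_fst).dotProduct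
          (continuous_const.matrix_mulVec (continuous_snd.matrix_mulVec continuous_fst))
      exact hH.continuousAt.comp (hv.continuousAt.prodMk hdetinv)
    have h1 : ContinuousAt (fun p : ℝ × ℝ =>
        ((k:ℝ)+1) * ((μc α - μc β) ⬝ᵥ mbar k xs) /
          ((1 + ((k:ℝ)+1) * (p.1^2/σx^2)) * σx^2)) (0, 0) := by
      apply ContinuousAt.div continuousAt_const (by fun_prop)
      norm_num [hσx2]
    have h2 : ContinuousAt (fun p : ℝ × ℝ =>
        (k:ℝ) * (2 * ((wc α - wc β) ⬝ᵥ wbar k xs ys) - f (wc α) p.2 + f (wc β) p.2) /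
          (2*σy^2)) (0, 0) := by
      apply ContinuousAt.div _ continuousAt_const (by norm_num [hσy2])
      have hsnd : ContinuousAt (Prod.snd : ℝ × ℝ → ℝ) (0, 0) := continuous_snd.continuousAt
      have hfc2 : ∀ w : Fin d → ℝ, ContinuousAt (fun p : ℝ × ℝ => f w p.2) (0, 0) := by
        intro w
        exact ContinuousAt.comp (g := f w) (f := (Prod.snd : ℝ × ℝ → ℝ))
          (x := ((0:ℝ), (0:ℝ))) (hfcont w) hsnd
      exact continuousAt_const.mul
        ((continuousAt_const.sub (hfc2 (wc α))).add (hfc2 (wc β)))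
    exact h1.add h2
  -- value of G at (0,0)
  have hf0 : ∀ w : Fin d → ℝ, f w 0 = (k:ℝ)⁻¹ * ∑ i : Fin k, (xs i.castSucc ⬝ᵥ w)^2 := by
    intro w
    have hB1 : Bw 0 σy k xs = 1 := by
      rw [Bw]
      norm_num
    simp only [hf, hB1, inv_one, Matrix.one_mulVec]
    norm_num
    exact quad_barSigma xs w
  have hGval : G (0, 0) =
      ((sqnorm (μc β - xs (Fin.last k)) - sqnorm (μc α - xs (Fin.last k))) / (2 * σx ^ 2) +
        ∑ i : Fin k,
          ((sqnorm (μc β - xs i.castSucc) - sqnorm (μc α - xs i.castSucc)) / (2 * σx ^ 2) +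
            ((dotProduct (xs i.castSucc) (wc β) - dotProduct (xs i.castSucc) wstar) ^ 2 -
              (dotProduct (xs i.castSucc) (wc α) - dotProduct (xs i.castSucc) wstar) ^ 2)
              / (2 * σy ^ 2))) := by
    have hK : ((k:ℝ)+1) ≠ 0 := by positivity
    have hμterm : ∀ x : Fin d → ℝ,
        sqnorm (μc β - x) - sqnorm (μc α - x) = 2 * ((μc α - μc β) ⬝ᵥ x) := by
      intro x
      simp only [sqnorm]
      rw [sqnorm_sub', sqnorm_sub', sub_dotProduct, hn]
      ring
    have e1 : ((k:ℝ)+1) * ((μc α - μc β) ⬝ᵥ mbar k xs)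
        = ((μc α - μc β) ⬝ᵥ xs (Fin.last k))
          + ∑ i : Fin k, ((μc α - μc β) ⬝ᵥ xs i.castSucc) := by
      rw [mbar, dotProduct_smul, smul_eq_mul, dotProduct_finsum, Fin.sum_univ_castSucc,
        ← mul_assoc, mul_inv_cancel₀ hK, one_mul]
      ring
    have e2 : (k:ℝ) * (2 * ((wc α - wc β) ⬝ᵥ wbar k xs ys) - f (wc α) 0 + f (wc β) 0)
        = ∑ i : Fin k, ((xs i.castSucc ⬝ᵥ wc β)^2 - (xs i.castSucc ⬝ᵥ wc α)^2
            - 2 * (xs i.castSucc ⬝ᵥ wstar)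
              * ((xs i.castSucc ⬝ᵥ wc β) - (xs i.castSucc ⬝ᵥ wc α))) := by
      rw [hf0, hf0, wbar, dotProduct_smul, smul_eq_mul, dotProduct_finsum]
      rcases Nat.eq_zero_or_pos k with hk | hk
      · subst hk; simp
      · have hk0 : (k:ℝ) ≠ 0 := Nat.cast_ne_zero.mpr hk.ne'
        have hcomb : (k:ℝ) * (2 * ((k:ℝ)⁻¹
                * ∑ i : Fin k, (wc α - wc β) ⬝ᵥ (ys i • xs i.castSucc))
              - (k:ℝ)⁻¹ * ∑ i : Fin k, (xs i.castSucc ⬝ᵥ wc α)^2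
              + (k:ℝ)⁻¹ * ∑ i : Fin k, (xs i.castSucc ⬝ᵥ wc β)^2)
            = ∑ i : Fin k, (2 * ((wc α - wc β) ⬝ᵥ (ys i • xs i.castSucc))
              - (xs i.castSucc ⬝ᵥ wc α)^2 + (xs i.castSucc ⬝ᵥ wc β)^2) := by
          rw [Finset.sum_add_distrib, Finset.sum_sub_distrib, ← Finset.mul_sum]
          field_simp
        rw [hcomb]
        refine Finset.sum_congr rfl fun i _ => ?_
        rw [hys i, dotProduct_smul, smul_eq_mul, sub_dotProduct,
          dotProduct_comm (wc α), dotProduct_comm (wc β)]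
        ring
    have hG00 : G (0, 0)
        = ((k:ℝ)+1) * ((μc α - μc β) ⬝ᵥ mbar k xs) / σx^2
          + (k:ℝ) * (2 * ((wc α - wc β) ⬝ᵥ wbar k xs ys) - f (wc α) 0 + f (wc β) 0)
            / (2*σy^2) := by
      rw [hG]
      norm_num
    rw [hG00, e1, e2, add_div, Finset.sum_div, Finset.sum_div, add_assoc,
      ← Finset.sum_add_distrib]
    simp only [hμterm]
    congr 1
    · rw [mul_div_mul_left _ _ (two_ne_zero (α := ℝ))]
    · refine Finset.sum_congr rfl fun i _ => ?_
      rw [mul_div_mul_left _ _ (two_ne_zero (α := ℝ))]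
      congr 1
      ring
  have hT := hGc.tendsto.mono_left (nhdsWithin_le_nhds
    (s := (Set.Ioi (0:ℝ) ×ˢ Set.Ioi (0:ℝ))))
  rw [hGval] at hT
  exact Filter.Tendsto.congr' (eventually_nhdsWithin_of_forall fun p hp => (hEq p hp).symm) hT
end
end
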